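/- Consider the alphabet {a, b}, and for each n let E_n be the event that a word of length n contains two equal disjoint (non-overlapping) factors each of length at least 3·log₂ n. Then under the uniform probability P̃_n on Lyndon words of length n, P̃_n(E_n) = O(n^{−1}) as n → ∞; likewise, under the uniform probability P_n on all words of length n, P_n(E_n) = O(n^{−1}). -/

import Mathlib

open scoped Classical

/-- A Lyndon word: strictly smaller, in lexicographic order, than each of its
proper (nonempty) suffixes. -/
def IsLyndon {α : Type*} [LinearOrder α] (w : List α) : Prop :=
  ∀ i, 0 < i → i < w.length → List.Lex (· < ·) w (w.drop i)

/-- The finite set of Lyndon words of length `n` over a two-letter alphabet. -/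
noncomputable def lyndonWords (q n : ℕ) : Finset (Fin n → Fin q) :=
  Finset.univ.filter fun w => IsLyndon (List.ofFn w)

/-- The word `w` contains two equal, disjoint (non-overlapping) factors, each of
length at least `T`. -/
def TwoEqualDisjointFactors {α : Type*} (w : List α) (T : ℝ) : Prop :=
  ∃ u l₁ l₂ l₃ : List α,
    T ≤ (u.length : ℝ) ∧ w = l₁ ++ u ++ l₂ ++ u ++ l₃


section Lex

variable {α : Type*} [LinearOrder α]

lemma lex_append_right {s t : List α} (h : List.Lex (· < ·) s t) (u : List α) :
    List.Lex (· < ·) s (t ++ u) := by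
  induction h with
  | nil => exact List.Lex.nil
  | @rel a l₁ b l₂ hab => exact List.Lex.rel hab
  | @cons a l₁ l₂ h ih => exact List.Lex.cons ih

lemma lex_of_getElem : ∀ (s t : List α) (k : ℕ) (hs : k < s.length) (ht : k < t.length),
    (∀ i (h1 : i < s.length) (h2 : i < t.length), i < k → s[i] = t[i]) →
    s[k] < t[k] → List.Lex (· < ·) s t := by
  intro s
  induction s with
  | nil => intro t k hs; simp at hs
  | cons a s ih =>
    intro t k hs ht hag hlt
    match t with
    | [] => simp at ht
    | b :: t =>
      match k with
      | 0 =>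
        simp only [List.getElem_cons_zero] at hlt
        exact List.Lex.rel hlt
      | k + 1 =>
        have hab : a = b := by
          have := hag 0 (by simp) (by simp) (by omega)
          simpa using this
        subst hab
        refine List.Lex.cons ?_
        refine ih t k (by simpa using hs) (by simpa using ht) ?_ ?_
        · intro i h1 h2 hik
          have := hag (i+1) (by simpa using h1) (by simpa using h2) (by omega)
          simpa using this
        · have hks : k < s.length := by simpa using hs
          have hkt : k < t.length := by simpa using ht
          have h1 : (a :: s)[k+1] = s[k]'hks := List.getElem_cons_succ _ _ _ hs
          have h2 : (a :: t)[k+1] = t[k]'hkt := List.getElem_cons_succ _ _ _ ht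
          rw [h1, h2] at hlt
          exact hlt

lemma lyndon_lt_rotate {w : List α} (h : IsLyndon w) {k : ℕ} (h0 : 0 < k)
    (hk : k < w.length) : List.Lex (· < ·) w (w.rotate k) := by
  rw [List.rotate_eq_drop_append_take (le_of_lt hk)]
  exact lex_append_right (h k h0 hk) _

lemma lyndon_rotate_eq_self {w : List α} (h : IsLyndon w) {d : ℕ}
    (hd : d < w.length) (heq : w.rotate d = w) : d = 0 := by
  by_contra hne
  have hlex := lyndon_lt_rotate h (Nat.pos_of_ne_zero hne) hd
  rw [heq] at hlex
  exact (asymm_of (List.Lex (· < ·)) hlex) hlex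

lemma lyndon_rotate_injective {n : ℕ} {w₁ w₂ : List α} (h₁ : IsLyndon w₁)
    (h₂ : IsLyndon w₂) (hl₁ : w₁.length = n) (hl₂ : w₂.length = n)
    {r₁ r₂ : ℕ} (hr₁ : r₁ < n) (hr₂ : r₂ < n)
    (heq : w₁.rotate r₁ = w₂.rotate r₂) : w₁ = w₂ ∧ r₁ = r₂ := by
  have hn : 0 < n := lt_of_le_of_lt (Nat.zero_le _) hr₁
  have rotlen : ∀ (l : List α), l.length = n → l.rotate n = l := by
    intro l hl; rw [← hl, List.rotate_length]
  have rotmod : ∀ (l : List α) (x : ℕ), l.length = n → l.rotate (x % n) = l.rotate x := by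
    intro l x hl; rw [← hl, List.rotate_mod]
  have key : w₂ = w₁.rotate ((r₁ + (n - r₂)) % n) := by
    have e1 : (w₁.rotate r₁).rotate (n - r₂) = (w₂.rotate r₂).rotate (n - r₂) := by rw [heq]
    rw [List.rotate_rotate, List.rotate_rotate] at e1
    have e2 : r₂ + (n - r₂) = n := by omega
    rw [e2, rotlen w₂ hl₂] at e1
    rw [rotmod w₁ _ hl₁, ← e1]
  set d := (r₁ + (n - r₂)) % n with hdd
  have hdn : d < n := Nat.mod_lt _ hn
  by_cases hd0 : d = 0
  · rw [hd0, List.rotate_zero] at key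
    constructor
    · exact key.symm
    · -- from (r₁ + (n - r₂)) % n = 0 conclude r₁ = r₂
      have hdvd : n ∣ (r₁ + (n - r₂)) := Nat.dvd_of_mod_eq_zero (by rw [← hdd]; exact hd0)
      obtain ⟨c, hc⟩ := hdvd
      have hclt : c < 2 := by
        by_contra hcge
        push_neg at hcge
        have : n * 2 ≤ n * c := Nat.mul_le_mul_left n hcge
        omega
      interval_cases c <;> omega
  · exfalso
    have hlex1 : List.Lex (· < ·) w₁ w₂ := by
      rw [key]
      exact lyndon_lt_rotate h₁ (Nat.pos_of_ne_zero hd0) (by omega)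
    have key2 : w₁ = w₂.rotate (n - d) := by
      have e1 : w₂.rotate (n - d) = (w₁.rotate d).rotate (n - d) := by rw [← key]
      rw [List.rotate_rotate] at e1
      have e2 : d + (n - d) = n := by omega
      rw [e2, rotlen w₁ hl₁] at e1
      exact e1.symm
    have hlex2 : List.Lex (· < ·) w₂ w₁ := by
      rw [key2]
      exact lyndon_lt_rotate h₂ (by omega) (by omega)
    exact (asymm_of (List.Lex (· < ·)) hlex1) hlex2

end Lex


section Cyl

variable {n : ℕ}

/-- access a function word at a natural index, defaulting to 0 -/
def av {n : ℕ} (w : Fin n → Fin 2) (k : ℕ) : Fin 2 :=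
  if h : k < n then w ⟨k, h⟩ else 0

lemma av_lt {w : Fin n → Fin 2} {k : ℕ} (h : k < n) : av w k = w ⟨k, h⟩ := dif_pos h

/-- rotation of a function word -/
def rotf (hn : 0 < n) (r : ℕ) (w : Fin n → Fin 2) : Fin n → Fin 2 :=
  fun x => w ⟨((x : ℕ) + r) % n, Nat.mod_lt _ hn⟩

lemma ofFn_rotf (hn : 0 < n) (r : ℕ) (w : Fin n → Fin 2) :
    List.ofFn (rotf hn r w) = (List.ofFn w).rotate r := by
  apply List.ext_get
  · simp
  · intro k h₁ h₂
    rw [List.get_rotate]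
    simp [List.get_ofFn, rotf, List.length_ofFn]

lemma cyl_count {N : ℕ} (P : (Fin N → Fin 2) → Prop) [inst : DecidablePred P]
    (B : Finset (Fin N))
    (hrec : ∀ w w', P w → P w' → (∀ x, x ∉ B → w x = w' x) → w = w') :
    (Finset.univ.filter P).card * 2 ^ B.card ≤ 2 ^ N := by
  classical
  have htarget : (Finset.univ : Finset (Fin N → Fin 2)).card = 2 ^ N := by
    rw [Finset.card_univ, Fintype.card_fun]
    simp
  have hsub : (Finset.univ : Finset ((↥B : Type) → Fin 2)).card = 2 ^ B.card := by
    rw [Finset.card_univ, Fintype.card_fun]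
    simp [Fintype.card_coe]
  rw [← htarget]
  have := Finset.card_le_card_of_injOn
    (f := fun p : ((Fin N → Fin 2) × ((↥B : Type) → Fin 2)) =>
      (fun x => if h : x ∈ B then p.2 ⟨x, h⟩ else p.1 x : Fin N → Fin 2))
    (s := (Finset.univ.filter P) ×ˢ (Finset.univ : Finset ((↥B : Type) → Fin 2)))
    (t := Finset.univ)
    (by intro a _; exact Finset.mem_univ _)
    ?_
  · calc (Finset.univ.filter P).card * 2 ^ B.card
        = ((Finset.univ.filter P) ×ˢ (Finset.univ : Finset ((↥B : Type) → Fin 2))).card := by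
          rw [Finset.card_product, hsub]
      _ ≤ _ := this
  · intro p hp q hq heq
    simp only [Finset.coe_product, Set.mem_prod, Finset.mem_coe, Finset.mem_filter] at hp hq
    have h2 : p.2 = q.2 := by
      funext x
      have := congrFun heq (x : Fin N)
      simpa [x.2] using this
    have h1 : p.1 = q.1 := by
      apply hrec _ _ hp.1.2 hq.1.2
      intro x hx
      have := congrFun heq x
      simpa [hx] using this
    exact Prod.ext h1 h2

lemma cylIJ {L i j : ℕ} (hij : i + L ≤ j) (hjn : j + L ≤ n) :
    (Finset.univ.filter
      (fun w : Fin n → Fin 2 => ∀ t, t < L → av w (i + t) = av w (j + t))).card * 2 ^ L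
      ≤ 2 ^ n := by
  have hmem : ∀ x ∈ Finset.Ico j (j + L), x < n := by
    intro x hx; rw [Finset.mem_Ico] at hx; omega
  have hcard : ((Finset.Ico j (j + L)).attachFin hmem).card = L := by
    rw [Finset.card_attachFin, Nat.card_Ico]; omega
  have main := cyl_count (fun w : Fin n → Fin 2 => ∀ t, t < L → av w (i + t) = av w (j + t))
    ((Finset.Ico j (j + L)).attachFin hmem) ?_
  · rw [hcard] at main; exact main
  intro w w' hw hw' hagree
  funext x
  by_cases hx : x ∈ (Finset.Ico j (j + L)).attachFin hmem
  · rw [Finset.mem_attachFin, Finset.mem_Ico] at hx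
    obtain ⟨t, ht, hxval⟩ : ∃ t, t < L ∧ (x : ℕ) = j + t := ⟨(x : ℕ) - j, by omega, by omega⟩
    have hxeq : x = (⟨j + t, by omega⟩ : Fin n) := by
      apply Fin.ext; simp [hxval]
    have hint : i + t < n := by omega
    have hint' : (⟨i + t, hint⟩ : Fin n) ∉ (Finset.Ico j (j + L)).attachFin hmem := by
      rw [Finset.mem_attachFin, Finset.mem_Ico]
      simp only
      omega
    calc w x = av w (j + t) := by rw [hxeq, av_lt (by omega)]
      _ = av w (i + t) := (hw t ht).symm
      _ = w' ⟨i + t, hint⟩ := by rw [av_lt hint]; exact hagree _ hint'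
      _ = av w' (i + t) := (av_lt hint).symm
      _ = av w' (j + t) := hw' t ht
      _ = w' x := by rw [hxeq, av_lt (by omega)]
  · exact hagree x hx

lemma cylZero {ℓ m p : ℕ} (h : p + m ≤ ℓ) :
    (Finset.univ.filter
      (fun u : Fin ℓ → Fin 2 => ∀ x, x < m → av u (p + x) = 0)).card * 2 ^ m ≤ 2 ^ ℓ := by
  have hmem : ∀ x ∈ Finset.Ico p (p + m), x < ℓ := by
    intro x hx; rw [Finset.mem_Ico] at hx; omega
  have hcard : ((Finset.Ico p (p + m)).attachFin hmem).card = m := by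
    rw [Finset.card_attachFin, Nat.card_Ico]; omega
  have main := cyl_count (fun u : Fin ℓ → Fin 2 => ∀ x, x < m → av u (p + x) = 0)
    ((Finset.Ico p (p + m)).attachFin hmem) ?_
  · rw [hcard] at main; exact main
  intro w w' hw hw' hagree
  funext x
  by_cases hx : x ∈ (Finset.Ico p (p + m)).attachFin hmem
  · rw [Finset.mem_attachFin, Finset.mem_Ico] at hx
    obtain ⟨t, ht, hxval⟩ : ∃ t, t < m ∧ (x : ℕ) = p + t := ⟨(x : ℕ) - p, by omega, by omega⟩
    have hxeq : x = (⟨p + t, by omega⟩ : Fin ℓ) := by apply Fin.ext; simp [hxval]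
    calc w x = av w (p + t) := by rw [hxeq, av_lt (by omega)]
      _ = 0 := hw t ht
      _ = av w' (p + t) := (hw' t ht).symm
      _ = w' x := by rw [hxeq, av_lt (by omega)]
  · exact hagree x hx

end Cyl

def Qpred (n L : ℕ) (w : Fin n → Fin 2) : Prop :=
  ∃ i j : ℕ, i + L ≤ j ∧ j + L ≤ n ∧ ∀ t, t < L → av w (i + t) = av w (j + t)

lemma getElem?_mid {α : Type*} (x y z : List α) (t : ℕ) (ht : t < y.length) :
    (x ++ (y ++ z))[x.length + t]? = some (y[t]'ht) := by
  rw [List.getElem?_append_right (by omega)]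
  have h1 : x.length + t - x.length = t := by omega
  rw [h1, List.getElem?_append, if_pos ht, List.getElem?_eq_getElem ht]

lemma E_to_Q {n : ℕ} {T : ℝ} {w : Fin n → Fin 2}
    (h : TwoEqualDisjointFactors (List.ofFn w) T) :
    Qpred n ⌈T⌉₊ w := by
  obtain ⟨u, l₁, l₂, l₃, hT, heq⟩ := h
  set L := ⌈T⌉₊ with hLdef
  have hLu : L ≤ u.length := Nat.ceil_le.mpr hT
  have hlen : l₁.length + u.length + l₂.length + u.length + l₃.length = n := by
    have := congrArg List.length heq
    simp only [List.length_ofFn, List.length_append] at this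
    omega
  have heq' : List.ofFn w = l₁ ++ (u ++ (l₂ ++ (u ++ l₃))) := by
    rw [heq]; simp [List.append_assoc]
  have heq'' : List.ofFn w = (l₁ ++ (u ++ l₂)) ++ (u ++ l₃) := by
    rw [heq]; simp [List.append_assoc]
  refine ⟨l₁.length, l₁.length + u.length + l₂.length, by omega, by omega, ?_⟩
  intro t ht
  have htu : t < u.length := by omega
  have hitn : l₁.length + t < n := by omega
  have hjtn : l₁.length + u.length + l₂.length + t < n := by omega
  have e1 : (List.ofFn w)[l₁.length + t]? = some (u[t]'htu) := by
    rw [heq']; exact getElem?_mid l₁ u (l₂ ++ (u ++ l₃)) t htu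
  have e2 : (List.ofFn w)[l₁.length + u.length + l₂.length + t]? = some (u[t]'htu) := by
    rw [heq'']
    have hxlen : (l₁ ++ (u ++ l₂)).length = l₁.length + u.length + l₂.length := by
      simp [List.length_append]; omega
    have := getElem?_mid (l₁ ++ (u ++ l₂)) u l₃ t htu
    rw [hxlen] at this
    exact this
  have e1' : (List.ofFn w)[l₁.length + t]? = some (av w (l₁.length + t)) := by
    rw [List.getElem?_eq_getElem (by simpa using hitn)]
    rw [List.getElem_ofFn]
    rw [av_lt hitn]
  have e2' : (List.ofFn w)[l₁.length + u.length + l₂.length + t]?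
      = some (av w (l₁.length + u.length + l₂.length + t)) := by
    rw [List.getElem?_eq_getElem (by simpa using hjtn)]
    rw [List.getElem_ofFn]
    rw [av_lt hjtn]
  rw [e1] at e1'
  rw [e2] at e2'
  rw [← Option.some_inj]
  rw [← e1', ← e2']
section Rot

variable {n : ℕ}

lemma av_rotf (hn : 0 < n) (r : ℕ) (w : Fin n → Fin 2) {k : ℕ} (hk : k < n) :
    av (rotf hn r w) k = av w ((k + r) % n) := by
  rw [av_lt hk, av_lt (Nat.mod_lt _ hn)]
  rfl

lemma rot_preserves {L : ℕ} (hn : 0 < n) {w : Fin n → Fin 2} {i j r : ℕ}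
    (hij : i + L ≤ j) (hjn : j + L ≤ n)
    (hQ : ∀ t, t < L → av w (i + t) = av w (j + t)) (hr : r < n)
    (hcase : r ≤ i ∨ (i + L ≤ r ∧ r ≤ j) ∨ j + L ≤ r) :
    Qpred n L (rotf hn r w) := by
  rcases hcase with hc | hc | hc
  · refine ⟨i - r, j - r, by omega, by omega, ?_⟩
    intro t ht
    have e1 : av (rotf hn r w) (i - r + t) = av w (i + t) := by
      rw [av_rotf hn r w (by omega)]
      congr 1
      have : i - r + t + r = i + t := by omega
      rw [this, Nat.mod_eq_of_lt (by omega)]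
    have e2 : av (rotf hn r w) (j - r + t) = av w (j + t) := by
      rw [av_rotf hn r w (by omega)]
      congr 1
      have : j - r + t + r = j + t := by omega
      rw [this, Nat.mod_eq_of_lt (by omega)]
    rw [e1, e2]
    exact hQ t ht
  · refine ⟨j - r, i + (n - r), by omega, by omega, ?_⟩
    intro t ht
    have e1 : av (rotf hn r w) (j - r + t) = av w (j + t) := by
      rw [av_rotf hn r w (by omega)]
      congr 1
      have : j - r + t + r = j + t := by omega
      rw [this, Nat.mod_eq_of_lt (by omega)]
    have e2 : av (rotf hn r w) (i + (n - r) + t) = av w (i + t) := by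
      rw [av_rotf hn r w (by omega)]
      congr 1
      have : i + (n - r) + t + r = i + t + n := by omega
      rw [this, Nat.add_mod_right, Nat.mod_eq_of_lt (by omega)]
    rw [e1, e2]
    exact (hQ t ht).symm
  · refine ⟨i + (n - r), j + (n - r), by omega, by omega, ?_⟩
    intro t ht
    have e1 : av (rotf hn r w) (i + (n - r) + t) = av w (i + t) := by
      rw [av_rotf hn r w (by omega)]
      congr 1
      have : i + (n - r) + t + r = i + t + n := by omega
      rw [this, Nat.add_mod_right, Nat.mod_eq_of_lt (by omega)]
    have e2 : av (rotf hn r w) (j + (n - r) + t) = av w (j + t) := by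
      rw [av_rotf hn r w (by omega)]
      congr 1
      have : j + (n - r) + t + r = j + t + n := by omega
      rw [this, Nat.add_mod_right, Nat.mod_eq_of_lt (by omega)]
    rw [e1, e2]
    exact hQ t ht

lemma Ecyl_bound {L : ℕ} (hL : 1 ≤ L) :
    (Finset.univ.filter (Qpred n L)).card * 2 ^ L ≤ n ^ 2 * 2 ^ n := by
  classical
  set D := (Finset.range n) ×ˢ (Finset.range n) with hD
  set f : ℕ × ℕ → Finset (Fin n → Fin 2) := fun ij =>
    Finset.univ.filter (fun w => ij.1 + L ≤ ij.2 ∧ ij.2 + L ≤ n ∧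
      ∀ t, t < L → av w (ij.1 + t) = av w (ij.2 + t)) with hf
  have hsub : Finset.univ.filter (Qpred n L) ⊆ D.biUnion f := by
    intro w hw
    rw [Finset.mem_filter] at hw
    obtain ⟨_, i, j, h1, h2, h3⟩ := hw
    rw [Finset.mem_biUnion]
    refine ⟨(i, j), ?_, ?_⟩
    · rw [hD, Finset.mem_product, Finset.mem_range, Finset.mem_range]
      constructor <;> omega
    · rw [hf, Finset.mem_filter]
      exact ⟨Finset.mem_univ _, h1, h2, h3⟩
  have hcards : ∀ ij : ℕ × ℕ, (f ij).card * 2 ^ L ≤ 2 ^ n := by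
    intro ij
    by_cases hcond : ij.1 + L ≤ ij.2 ∧ ij.2 + L ≤ n
    · have hsub2 : f ij ⊆ Finset.univ.filter
          (fun w : Fin n → Fin 2 => ∀ t, t < L → av w (ij.1 + t) = av w (ij.2 + t)) := by
        intro w hw
        rw [hf, Finset.mem_filter] at hw
        rw [Finset.mem_filter]
        exact ⟨Finset.mem_univ _, hw.2.2.2⟩
      calc (f ij).card * 2 ^ L ≤ _ * 2 ^ L :=
            Nat.mul_le_mul_right _ (Finset.card_le_card hsub2)
        _ ≤ 2 ^ n := cylIJ hcond.1 hcond.2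
    · have : f ij = ∅ := by
        rw [hf]
        apply Finset.filter_false_of_mem
        intro w _
        intro hcontra
        exact hcond ⟨hcontra.1, hcontra.2.1⟩
      rw [this]
      simp
  calc (Finset.univ.filter (Qpred n L)).card * 2 ^ L
      ≤ (D.biUnion f).card * 2 ^ L := Nat.mul_le_mul_right _ (Finset.card_le_card hsub)
    _ ≤ (∑ ij ∈ D, (f ij).card) * 2 ^ L := Nat.mul_le_mul_right _ Finset.card_biUnion_le
    _ = ∑ ij ∈ D, ((f ij).card * 2 ^ L) := by rw [Finset.sum_mul]
    _ ≤ ∑ _ij ∈ D, 2 ^ n := Finset.sum_le_sum (fun ij _ => hcards ij)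
    _ = D.card * 2 ^ n := by rw [Finset.sum_const, smul_eq_mul]
    _ = n ^ 2 * 2 ^ n := by rw [hD, Finset.card_product, Finset.card_range]; ring

end Rot
section SBound

variable {n : ℕ}

lemma mem_lyndonWords {w : Fin n → Fin 2} :
    w ∈ lyndonWords 2 n ↔ IsLyndon (List.ofFn w) := by
  rw [lyndonWords, Finset.mem_filter]
  simp

lemma S_bound {L : ℕ} (hn : 0 < n) (hL : 1 ≤ L) :
    ((lyndonWords 2 n).filter (fun w => Qpred n L w)).card * (n - 2 * L)
      ≤ (Finset.univ.filter (Qpred n L)).card := by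
  classical
  set S := (lyndonWords 2 n).filter (fun w => Qpred n L w) with hS
  set G : (Fin n → Fin 2) → Finset ℕ := fun w =>
    (Finset.range n).filter (fun r => Qpred n L (rotf hn r w)) with hG
  set TT := S.biUnion (fun w => (G w).image (fun r => rotf hn r w)) with hTT
  have hlynd : ∀ w ∈ S, IsLyndon (List.ofFn w) := by
    intro w hw
    rw [hS, Finset.mem_filter] at hw
    exact mem_lyndonWords.mp hw.1
  -- TT is inside the Q-filter
  have hsub : TT ⊆ Finset.univ.filter (Qpred n L) := by
    intro v hv
    rw [hTT, Finset.mem_biUnion] at hv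
    obtain ⟨w, hw, hv⟩ := hv
    rw [Finset.mem_image] at hv
    obtain ⟨r, hr, rfl⟩ := hv
    rw [hG, Finset.mem_filter] at hr
    rw [Finset.mem_filter]
    exact ⟨Finset.mem_univ _, hr.2⟩
  -- pairwise disjoint images
  have hdisj : ∀ w₁ ∈ S, ∀ w₂ ∈ S, w₁ ≠ w₂ →
      Disjoint ((G w₁).image (fun r => rotf hn r w₁)) ((G w₂).image (fun r => rotf hn r w₂)) := by
    intro w₁ h₁ w₂ h₂ hne
    rw [Finset.disjoint_left]
    intro v hv1 hv2
    rw [Finset.mem_image] at hv1 hv2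
    obtain ⟨r₁, hr₁, he₁⟩ := hv1
    obtain ⟨r₂, hr₂, he₂⟩ := hv2
    rw [hG, Finset.mem_filter, Finset.mem_range] at hr₁ hr₂
    have hrot : (List.ofFn w₁).rotate r₁ = (List.ofFn w₂).rotate r₂ := by
      rw [← ofFn_rotf hn r₁ w₁, ← ofFn_rotf hn r₂ w₂, he₁, he₂]
    have := lyndon_rotate_injective (hlynd w₁ h₁) (hlynd w₂ h₂)
      List.length_ofFn List.length_ofFn hr₁.1 hr₂.1 hrot
    exact hne (List.ofFn_injective this.1)
  -- each image has card = card G w ≥ n - 2L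
  have himg : ∀ w ∈ S, ((G w).image (fun r => rotf hn r w)).card = (G w).card := by
    intro w hw
    apply Finset.card_image_of_injOn
    intro r₁ hr₁ r₂ hr₂ he
    rw [Finset.mem_coe, hG, Finset.mem_filter, Finset.mem_range] at hr₁ hr₂
    have he' : rotf hn r₁ w = rotf hn r₂ w := he
    have hrot : (List.ofFn w).rotate r₁ = (List.ofFn w).rotate r₂ := by
      rw [← ofFn_rotf hn r₁ w, ← ofFn_rotf hn r₂ w, he']
    exact (lyndon_rotate_injective (hlynd w hw) (hlynd w hw)
      List.length_ofFn List.length_ofFn hr₁.1 hr₂.1 hrot).2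
  have hGcard : ∀ w ∈ S, n - 2 * L ≤ (G w).card := by
    intro w hw
    rw [hS, Finset.mem_filter] at hw
    obtain ⟨i, j, h1, h2, h3⟩ := hw.2
    have hgood : (Finset.range n).filter
        (fun r => r ≤ i ∨ (i + L ≤ r ∧ r ≤ j) ∨ j + L ≤ r) ⊆ G w := by
      intro r hr
      rw [Finset.mem_filter, Finset.mem_range] at hr
      rw [hG, Finset.mem_filter, Finset.mem_range]
      exact ⟨hr.1, rot_preserves hn h1 h2 h3 hr.1 hr.2⟩
    have hbadsub : (Finset.range n).filter
        (fun r => ¬(r ≤ i ∨ (i + L ≤ r ∧ r ≤ j) ∨ j + L ≤ r))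
        ⊆ Finset.Ioo i (i + L) ∪ Finset.Ioo j (j + L) := by
      intro r hr
      rw [Finset.mem_filter, Finset.mem_range] at hr
      rw [Finset.mem_union, Finset.mem_Ioo, Finset.mem_Ioo]
      omega
    have hbadcard : ((Finset.range n).filter
        (fun r => ¬(r ≤ i ∨ (i + L ≤ r ∧ r ≤ j) ∨ j + L ≤ r))).card ≤ 2 * L := by
      calc _ ≤ (Finset.Ioo i (i + L) ∪ Finset.Ioo j (j + L)).card :=
            Finset.card_le_card hbadsub
        _ ≤ (Finset.Ioo i (i + L)).card + (Finset.Ioo j (j + L)).card :=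
            Finset.card_union_le _ _
        _ ≤ 2 * L := by rw [Nat.card_Ioo, Nat.card_Ioo]; omega
    have hsplit := Finset.card_filter_add_card_filter_not
      (s := Finset.range n) (p := fun r => r ≤ i ∨ (i + L ≤ r ∧ r ≤ j) ∨ j + L ≤ r)
    rw [Finset.card_range] at hsplit
    have := Finset.card_le_card hgood
    omega
  calc S.card * (n - 2 * L) = ∑ _w ∈ S, (n - 2 * L) := by
        rw [Finset.sum_const, smul_eq_mul, Nat.mul_comm]
    _ ≤ ∑ w ∈ S, ((G w).image (fun r => rotf hn r w)).card := by
        apply Finset.sum_le_sum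
        intro w hw
        rw [himg w hw]
        exact hGcard w hw
    _ = TT.card := (Finset.card_biUnion hdisj).symm
    _ ≤ (Finset.univ.filter (Qpred n L)).card := Finset.card_le_card hsub

end SBound
section LyndonLower

variable {n : ℕ}

lemma isLyndon_of_av (hn : 0 < n) (w : Fin n → Fin 2)
    (H : ∀ i, 0 < i → i < n →
      ∃ k, i + k < n ∧ (∀ x, x < k → av w x = av w (i + x)) ∧ av w k < av w (i + k)) :
    IsLyndon (List.ofFn w) := by
  intro i hi hilen
  rw [List.length_ofFn] at hilen
  obtain ⟨k, hkn, hag, hlt⟩ := H i hi hilen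
  have hls : (List.ofFn w).length = n := List.length_ofFn
  have hld : ((List.ofFn w).drop i).length = n - i := by
    rw [List.length_drop, hls]
  apply lex_of_getElem _ _ k (by omega) (by omega)
  · intro x h1 h2 hxk
    rw [hls] at h1
    rw [hld] at h2
    have e1 : (List.ofFn w)[x]'(by omega) = av w x := by
      rw [av_lt (show x < n by omega), List.getElem_ofFn]
    have e2 : ((List.ofFn w).drop i)[x]'(by rw [hld]; omega) = av w (i + x) := by
      rw [av_lt (show i + x < n by omega), List.getElem_drop, List.getElem_ofFn]
    rw [e1, e2]
    exact hag x hxk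
  · have e1 : (List.ofFn w)[k]'(by omega) = av w k := by
      rw [av_lt (show k < n by omega), List.getElem_ofFn]
    have e2 : ((List.ofFn w).drop i)[k]'(by rw [hld]; omega) = av w (i + k) := by
      rw [av_lt (show i + k < n by omega), List.getElem_drop, List.getElem_ofFn]
    rw [e1, e2]
    exact hlt

lemma fin2_eq_zero_of_ne_one {v : Fin 2} (h : v ≠ 1) : v = 0 := by omega

/-- embedding of arbitrary words into Lyndon words: a^m b u b -/
def emb (n m ℓ : ℕ) (u : Fin ℓ → Fin 2) : Fin n → Fin 2 :=
  fun x => if (x : ℕ) < m then 0 else if (x : ℕ) = m ∨ (x : ℕ) = n - 1 then 1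
    else av u ((x : ℕ) - m - 1)

lemma av_emb {m ℓ : ℕ} (u : Fin ℓ → Fin 2) {k : ℕ} (hk : k < n) :
    av (emb n m ℓ u) k = if k < m then 0 else if k = m ∨ k = n - 1 then 1
      else av u (k - m - 1) := by
  rw [av_lt hk]
  rfl

lemma emb_lyndon {m ℓ : ℕ} (hm : 1 ≤ m) (hℓ : ℓ = n - m - 2) (hnm : m + 2 ≤ n)
    (u : Fin ℓ → Fin 2) (hu : ∀ p, p + m ≤ ℓ → ∃ x, x < m ∧ av u (p + x) = 1) :
    IsLyndon (List.ofFn (emb n m ℓ u)) := by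
  have hn : 0 < n := by omega
  set w := emb n m ℓ u with hw
  apply isLyndon_of_av hn
  intro i hi hin
  -- value facts
  have hW : ∀ k, k < n → av w k = if k < m then 0 else if k = m ∨ k = n - 1 then 1
      else av u (k - m - 1) := fun k hk => av_emb u hk
  have hWm : av w m = 1 := by rw [hW m (by omega)]; simp [Nat.lt_irrefl]
  have hWlast : av w (n - 1) = 1 := by
    rw [hW (n - 1) (by omega)]
    have h1 : ¬(n - 1 < m) := by omega
    simp [h1]
  have hWsmall : ∀ k, k < m → av w k = 0 := by
    intro k hk; rw [hW k (by omega)]; simp [hk]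
  by_cases hi1 : av w i = 1
  · -- k = 0
    refine ⟨0, by omega, by omega, ?_⟩
    simp only [Nat.add_zero]
    rw [hWsmall 0 (by omega), hi1]
    decide
  · by_cases him : i < m
    · -- k = m - i
      refine ⟨m - i, by omega, ?_, ?_⟩
      · intro x hx
        rw [hWsmall x (by omega), hWsmall (i + x) (by omega)]
      · rw [hWsmall (m - i) (by omega)]
        have : i + (m - i) = m := by omega
        rw [this, hWm]
        decide
    · -- m < i < n-1, av w i = 0
      have hi0 : av w i = 0 := fin2_eq_zero_of_ne_one hi1
      have him' : m < i := by
        rcases Nat.lt_or_ge m i with h | h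
        · exact h
        · exfalso
          have : i = m := by omega
          rw [this, hWm] at hi1
          exact hi1 rfl
      have hilast : i < n - 1 := by
        by_contra hcon
        have : i = n - 1 := by omega
        rw [this, hWlast] at hi1
        exact hi1 rfl
      -- least k with av w (i + k) = 1
      have hex : ∃ k, av w (i + k) = 1 := by
        refine ⟨n - 1 - i, ?_⟩
        have : i + (n - 1 - i) = n - 1 := by omega
        rw [this]; exact hWlast
      set k := Nat.find hex with hk
      have hkspec : av w (i + k) = 1 := Nat.find_spec hex
      have hkmin : ∀ x, x < k → av w (i + x) ≠ 1 := fun x hx => Nat.find_min hex hx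
      have hkle : k ≤ n - 1 - i := by
        apply Nat.find_le
        have : i + (n - 1 - i) = n - 1 := by omega
        rw [this]; exact hWlast
      have hkpos : 0 < k := by
        rcases Nat.eq_zero_or_pos k with h | h
        · exfalso; rw [h] at hkspec; simp at hkspec; rw [hkspec] at hi0; simp at hi0
        · exact h
      have hkm : k < m := by
        by_contra hcon
        push_neg at hcon
        -- all of u at positions (i-m-1)..(i-m-1)+(m-1) are 0
        have hzero : ∀ x, x < m → av u ((i - m - 1) + x) = 0 := by
          intro x hx
          have hix : av w (i + x) = 0 := by
            rcases Nat.eq_zero_or_pos x with h0 | h0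
            · rw [h0]; simpa using hi0
            · exact fin2_eq_zero_of_ne_one (hkmin x (by omega))
          have hixn : i + x < n := by omega
          rw [hW (i + x) hixn] at hix
          have h1 : ¬(i + x < m) := by omega
          rw [if_neg h1] at hix
          by_cases hc : i + x = m ∨ i + x = n - 1
          · exfalso
            rw [if_pos hc] at hix
            exact absurd hix (by decide)
          · rw [if_neg hc] at hix
            have harg : i + x - m - 1 = (i - m - 1) + x := by omega
            rwa [harg] at hix
        -- apply hu
        have hple : (i - m - 1) + m ≤ ℓ := by omega
        obtain ⟨x, hxm, hxone⟩ := hu (i - m - 1) hple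
        rw [hzero x hxm] at hxone
        exact absurd hxone (by decide)
      refine ⟨k, by omega, ?_, ?_⟩
      · intro x hx
        rw [hWsmall x (by omega)]
        exact (fin2_eq_zero_of_ne_one (hkmin x hx)).symm
      · rw [hWsmall k (by omega), hkspec]
        decide

end LyndonLower
section GoodCount

lemma card_univ_words (N : ℕ) : (Finset.univ : Finset (Fin N → Fin 2)).card = 2 ^ N := by
  rw [Finset.card_univ, Fintype.card_fun]
  simp

lemma good_count {ℓ m : ℕ} (hm : 1 ≤ m) (hlm : m ≤ ℓ) (h2 : 2 * ℓ ≤ 2 ^ m) :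
    2 ^ ℓ ≤ 2 * ((Finset.univ : Finset (Fin ℓ → Fin 2)).filter
      (fun u => ∀ p, p + m ≤ ℓ → ∃ x, x < m ∧ av u (p + x) = 1)).card := by
  classical
  set P : (Fin ℓ → Fin 2) → Prop := fun u => ∀ p, p + m ≤ ℓ → ∃ x, x < m ∧ av u (p + x) = 1
    with hP
  have hsplit := Finset.card_filter_add_card_filter_not
    (s := (Finset.univ : Finset (Fin ℓ → Fin 2))) (p := P)
  rw [card_univ_words] at hsplit
  -- bad set bound
  set bad := (Finset.univ : Finset (Fin ℓ → Fin 2)).filter (fun u => ¬ P u) with hbad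
  have hbadsub : bad ⊆ (Finset.range ℓ).biUnion (fun p =>
      (Finset.univ : Finset (Fin ℓ → Fin 2)).filter
        (fun u => p + m ≤ ℓ ∧ ∀ x, x < m → av u (p + x) = 0)) := by
    intro u hu
    rw [hbad, Finset.mem_filter] at hu
    have hu2 : ¬ ∀ p, p + m ≤ ℓ → ∃ x, x < m ∧ av u (p + x) = 1 := hu.2
    push_neg at hu2
    obtain ⟨p, hple, hall⟩ := hu2
    rw [Finset.mem_biUnion]
    refine ⟨p, Finset.mem_range.mpr (by omega), ?_⟩
    rw [Finset.mem_filter]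
    refine ⟨Finset.mem_univ _, hple, ?_⟩
    intro x hx
    exact fin2_eq_zero_of_ne_one (hall x hx)
  have hcardp : ∀ p : ℕ, ((Finset.univ : Finset (Fin ℓ → Fin 2)).filter
      (fun u => p + m ≤ ℓ ∧ ∀ x, x < m → av u (p + x) = 0)).card ≤ 2 ^ (ℓ - m) := by
    intro p
    by_cases hple : p + m ≤ ℓ
    · have hsub2 : (Finset.univ : Finset (Fin ℓ → Fin 2)).filter
          (fun u => p + m ≤ ℓ ∧ ∀ x, x < m → av u (p + x) = 0) ⊆
          (Finset.univ : Finset (Fin ℓ → Fin 2)).filter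
          (fun u => ∀ x, x < m → av u (p + x) = 0) := by
        intro u hu
        rw [Finset.mem_filter] at hu ⊢
        exact ⟨hu.1, hu.2.2⟩
      have h1 := Finset.card_le_card hsub2
      have h2' := cylZero hple
      have h3 : 2 ^ ℓ = 2 ^ (ℓ - m) * 2 ^ m := by
        rw [← pow_add]
        congr 1
        omega
      rw [h3] at h2'
      have := le_trans (Nat.mul_le_mul_right (2 ^ m) h1) h2'
      exact Nat.le_of_mul_le_mul_right this (by positivity)
    · have : (Finset.univ : Finset (Fin ℓ → Fin 2)).filter
          (fun u => p + m ≤ ℓ ∧ ∀ x, x < m → av u (p + x) = 0) = ∅ := by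
        apply Finset.filter_false_of_mem
        intro u _ hcontra
        exact hple hcontra.1
      rw [this]
      simp
  have hbadcard : bad.card ≤ ℓ * 2 ^ (ℓ - m) := by
    calc bad.card ≤ _ := Finset.card_le_card hbadsub
      _ ≤ ∑ p ∈ Finset.range ℓ, ((Finset.univ : Finset (Fin ℓ → Fin 2)).filter
          (fun u => p + m ≤ ℓ ∧ ∀ x, x < m → av u (p + x) = 0)).card := Finset.card_biUnion_le
      _ ≤ ∑ _p ∈ Finset.range ℓ, 2 ^ (ℓ - m) := Finset.sum_le_sum (fun p _ => hcardp p)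
      _ = ℓ * 2 ^ (ℓ - m) := by rw [Finset.sum_const, smul_eq_mul, Finset.card_range]
  have hbad2 : 2 * bad.card ≤ 2 ^ ℓ := by
    calc 2 * bad.card ≤ 2 * (ℓ * 2 ^ (ℓ - m)) := by omega
      _ = (2 * ℓ) * 2 ^ (ℓ - m) := by ring
      _ ≤ 2 ^ m * 2 ^ (ℓ - m) := Nat.mul_le_mul_right _ h2
      _ = 2 ^ ℓ := by rw [← pow_add]; congr 1; omega
  show 2 ^ ℓ ≤ 2 * (Finset.filter P Finset.univ).card
  omega

lemma emb_injOn {n m ℓ : ℕ} (hm : 1 ≤ m) (hℓ : ℓ = n - m - 2) (hnm : m + 2 ≤ n) :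
    Function.Injective (emb n m ℓ) := by
  intro u₁ u₂ he
  funext x
  have hx : (x : ℕ) + m + 1 < n - 1 := by omega
  have hxn : (x : ℕ) + m + 1 < n := by omega
  have := congrFun he (⟨(x : ℕ) + m + 1, hxn⟩ : Fin n)
  simp only [emb] at this
  have h1 : ¬((x : ℕ) + m + 1 < m) := by omega
  have h2 : ¬((x : ℕ) + m + 1 = m ∨ (x : ℕ) + m + 1 = n - 1) := by omega
  rw [if_neg h1, if_neg h2, if_neg h1, if_neg h2] at this
  have h3 : (x : ℕ) + m + 1 - m - 1 = (x : ℕ) := by omega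
  rw [h3] at this
  rw [av_lt x.isLt, av_lt x.isLt] at this
  simpa using this

lemma lyndon_lower {n m : ℕ} (hm : 1 ≤ m) (hnm : 2 * m + 2 ≤ n) (h2 : 2 * n ≤ 2 ^ m) :
    2 ^ (n - m - 2) ≤ 2 * (lyndonWords 2 n).card := by
  classical
  set ℓ := n - m - 2 with hℓ
  have hlm : m ≤ ℓ := by omega
  have hinj := emb_injOn (n := n) (m := m) (ℓ := ℓ) hm rfl (by omega)
  have hmaps : ∀ u ∈ (Finset.univ : Finset (Fin ℓ → Fin 2)).filter
      (fun u => ∀ p, p + m ≤ ℓ → ∃ x, x < m ∧ av u (p + x) = 1),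
      emb n m ℓ u ∈ lyndonWords 2 n := by
    intro u hu
    rw [Finset.mem_filter] at hu
    rw [mem_lyndonWords]
    exact emb_lyndon hm rfl (by omega) u hu.2
  have hcard := Finset.card_le_card_of_injOn (emb n m ℓ) hmaps
    (fun a _ b _ h => hinj h)
  have hgood := good_count hm hlm (by omega)
  omega

end GoodCount
section Analysis

lemma log_le_two_sqrt {x : ℝ} (hx : 1 ≤ x) : Real.log x ≤ 2 * Real.sqrt x - 2 := by
  have hs : 0 < Real.sqrt x := Real.sqrt_pos.mpr (by linarith)
  have h1 : Real.log (Real.sqrt x) ≤ Real.sqrt x - 1 := Real.log_le_sub_one_of_pos hs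
  have h2 : Real.log (Real.sqrt x) = Real.log x / 2 := Real.log_sqrt (by linarith)
  rw [h2] at h1
  linarith

lemma master {n : ℕ} (hn : 1600 ≤ n) : 12 * (Real.log n / Real.log 2) + 4 ≤ (n : ℝ) := by
  have hn' : (1600 : ℝ) ≤ (n : ℝ) := by exact_mod_cast hn
  have hx : (1 : ℝ) ≤ (n : ℝ) := by linarith
  have hs0 : (0 : ℝ) ≤ Real.sqrt n := Real.sqrt_nonneg _
  have hss : Real.sqrt n * Real.sqrt n = (n : ℝ) := Real.mul_self_sqrt (by linarith)
  have hs40 : (40 : ℝ) ≤ Real.sqrt n := by nlinarith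
  have hlog : Real.log n ≤ 2 * Real.sqrt n - 2 := log_le_two_sqrt hx
  have hl2 : (2 : ℝ) / 3 ≤ Real.log 2 := by
    have := Real.log_two_gt_d9
    linarith
  have hl2pos : (0 : ℝ) < Real.log 2 := by linarith
  have hkey : Real.log n / Real.log 2 ≤ 3 * Real.sqrt n - 3 := by
    rw [div_le_iff₀ hl2pos]
    have h1 : (2 : ℝ) * Real.sqrt n - 2 ≤ (3 * Real.sqrt n - 3) * (2 / 3) := by nlinarith
    have h2 : (3 * Real.sqrt n - 3) * (2 / 3) ≤ (3 * Real.sqrt n - 3) * Real.log 2 := by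
      apply mul_le_mul_of_nonneg_left hl2 (by nlinarith)
    linarith
  nlinarith

end Analysis

theorem stmt_17 :
    ∃ K : ℝ, 0 < K ∧ ∃ n₀ : ℕ, ∀ n : ℕ, n₀ ≤ n →
      ((((lyndonWords 2 n).filter fun w =>
            TwoEqualDisjointFactors (List.ofFn w)
              (3 * (Real.log n / Real.log 2))).card : ℝ)
          / ((lyndonWords 2 n).card : ℝ) ≤ K / n)
      ∧ (((Finset.univ.filter fun w : Fin n → Fin 2 =>
            TwoEqualDisjointFactors (List.ofFn w)
              (3 * (Real.log n / Real.log 2))).card : ℝ)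
          / 2 ^ n ≤ K / n) := by
  refine ⟨64, by norm_num, 1600, ?_⟩
  intro n hn
  have hn0 : 0 < n := by omega
  have hn2 : 2 ≤ n := by omega
  have npos : (0 : ℝ) < n := by exact_mod_cast hn0
  set l2 : ℝ := Real.log n / Real.log 2 with hl2def
  have hl2pos : (0 : ℝ) < Real.log 2 := Real.log_pos (by norm_num)
  have hloglog : Real.log 2 ≤ Real.log n := by
    apply Real.log_le_log (by norm_num)
    exact_mod_cast hn2
  have hl2ge1 : 1 ≤ l2 := by
    rw [hl2def, le_div_iff₀ hl2pos]
    linarith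
  have hmaster : 12 * l2 + 4 ≤ (n : ℝ) := master hn
  set L := ⌈3 * l2⌉₊ with hLdef
  have hL1 : 1 ≤ L := Nat.one_le_ceil_iff.mpr (by linarith)
  have hLub : (L : ℝ) ≤ 3 * l2 + 1 := le_of_lt (Nat.ceil_lt_add_one (by linarith))
  have hLlb : 3 * l2 ≤ (L : ℝ) := Nat.le_ceil _
  have h4L : 4 * L ≤ n := by
    have h : (4 * L : ℝ) ≤ (n : ℝ) := by push_cast; linarith
    exact_mod_cast h
  have h2l2 : (2 : ℝ) ^ (l2 : ℝ) = n := by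
    have : l2 = Real.logb 2 n := rfl
    rw [this]
    exact Real.rpow_logb two_pos (by norm_num) npos
  have h2L : (n : ℝ) ^ 3 ≤ 2 ^ L := by
    have e1 : (2 : ℝ) ^ (3 * l2 : ℝ) ≤ (2 : ℝ) ^ ((L : ℕ) : ℝ) :=
      Real.rpow_le_rpow_of_exponent_le one_le_two hLlb
    rw [Real.rpow_natCast] at e1
    have e2 : (2 : ℝ) ^ (3 * l2 : ℝ) = (n : ℝ) ^ 3 := by
      rw [mul_comm]
      rw [Real.rpow_mul (by norm_num), h2l2]
      rw [show (3 : ℝ) = ((3 : ℕ) : ℝ) by norm_num, Real.rpow_natCast]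
    linarith [e2 ▸ e1]
  set m := ⌈l2⌉₊ + 1 with hmdef
  have hm1 : 1 ≤ m := by omega
  have hmub : (m : ℝ) ≤ l2 + 2 := by
    have := Nat.ceil_lt_add_one (show (0:ℝ) ≤ l2 by linarith)
    rw [hmdef]
    push_cast
    linarith
  have hmlb : l2 + 1 ≤ (m : ℝ) := by
    have := Nat.le_ceil l2
    rw [hmdef]
    push_cast
    linarith
  have hr22 : (2 : ℝ) ^ (2 : ℝ) = 4 := by
    rw [show (2 : ℝ) = ((2 : ℕ) : ℝ) by norm_num, Real.rpow_natCast]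
    norm_num
  have hr21 : (2 : ℝ) ^ (1 : ℝ) = 2 := Real.rpow_one 2
  have h2mub : (2 : ℝ) ^ (m : ℕ) ≤ 4 * n := by
    rw [← Real.rpow_natCast]
    calc (2 : ℝ) ^ ((m : ℕ) : ℝ) ≤ (2 : ℝ) ^ (l2 + 2) :=
          Real.rpow_le_rpow_of_exponent_le one_le_two hmub
      _ = (2 : ℝ) ^ (l2 : ℝ) * (2 : ℝ) ^ (2 : ℝ) := Real.rpow_add two_pos _ _
      _ = 4 * n := by rw [h2l2, hr22]; ring
  have h2mlb : 2 * (n : ℝ) ≤ (2 : ℝ) ^ (m : ℕ) := by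
    rw [← Real.rpow_natCast]
    calc 2 * (n : ℝ) = (2 : ℝ) ^ (l2 : ℝ) * (2 : ℝ) ^ (1 : ℝ) := by rw [h2l2, hr21]; ring
      _ = (2 : ℝ) ^ (l2 + 1) := (Real.rpow_add two_pos _ _).symm
      _ ≤ (2 : ℝ) ^ ((m : ℕ) : ℝ) := Real.rpow_le_rpow_of_exponent_le one_le_two hmlb
  have h2mubN : 2 ^ m ≤ 4 * n := by exact_mod_cast h2mub
  have h2mlbN : 2 * n ≤ 2 ^ m := by exact_mod_cast h2mlb
  have hnm : 2 * m + 2 ≤ n := by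
    have h : 2 * (m : ℝ) + 2 ≤ (n : ℝ) := by linarith
    exact_mod_cast h
  -- natural number facts
  have F1 := Ecyl_bound (n := n) (L := L) hL1
  have F2 := S_bound (n := n) (L := L) hn0 hL1
  have F3 := lyndon_lower hm1 hnm h2mlbN
  have LCpos : 0 < (lyndonWords 2 n).card := by
    have h1 : 1 ≤ 2 ^ (n - m - 2) := Nat.one_le_two_pow
    omega
  have F5 : 2 ^ n ≤ 32 * n * (lyndonWords 2 n).card := by
    have e : 2 ^ n = 2 ^ (n - m - 2) * 2 ^ (m + 2) := by
      rw [← pow_add]; congr 1; omega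
    have e2 : 2 ^ (m + 2) ≤ 16 * n := by
      have : 2 ^ (m + 2) = 4 * 2 ^ m := by rw [pow_add]; ring
      omega
    calc 2 ^ n = 2 ^ (n - m - 2) * 2 ^ (m + 2) := e
      _ ≤ (2 * (lyndonWords 2 n).card) * (16 * n) := Nat.mul_le_mul F3 e2
      _ = 32 * n * (lyndonWords 2 n).card := by ring
  -- subsets
  have hEsub : (Finset.univ.filter fun w : Fin n → Fin 2 =>
      TwoEqualDisjointFactors (List.ofFn w) (3 * (Real.log n / Real.log 2)))
      ⊆ Finset.univ.filter (Qpred n L) := by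
    intro w hw
    rw [Finset.mem_filter] at hw ⊢
    exact ⟨Finset.mem_univ _, E_to_Q hw.2⟩
  have hSsub : ((lyndonWords 2 n).filter fun w =>
      TwoEqualDisjointFactors (List.ofFn w) (3 * (Real.log n / Real.log 2)))
      ⊆ (lyndonWords 2 n).filter (fun w => Qpred n L w) := by
    intro w hw
    rw [Finset.mem_filter] at hw ⊢
    exact ⟨hw.1, E_to_Q hw.2⟩
  -- real versions
  have A3 : ((Finset.univ.filter (Qpred n L)).card : ℝ) * 2 ^ L ≤ (n : ℝ) ^ 2 * 2 ^ n := by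
    exact_mod_cast F1
  have A1 : (((lyndonWords 2 n).filter (fun w => Qpred n L w)).card : ℝ) * ((n - 2 * L : ℕ) : ℝ)
      ≤ ((Finset.univ.filter (Qpred n L)).card : ℝ) := by exact_mod_cast F2
  have A2 : (n : ℝ) / 2 ≤ ((n - 2 * L : ℕ) : ℝ) := by
    rw [Nat.cast_sub (by omega)]
    push_cast
    have : (4 * L : ℝ) ≤ n := by exact_mod_cast h4L
    linarith
  have F5R : (2 : ℝ) ^ n ≤ 32 * n * ((lyndonWords 2 n).card : ℝ) := by exact_mod_cast F5
  have LCposR : (0 : ℝ) < ((lyndonWords 2 n).card : ℝ) := by exact_mod_cast LCpos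
  set SR := (((lyndonWords 2 n).filter (fun w => Qpred n L w)).card : ℝ) with hSR
  set EcylR := ((Finset.univ.filter (Qpred n L)).card : ℝ) with hEc
  have SRnn : 0 ≤ SR := by positivity
  have Ecnn : 0 ≤ EcylR := by positivity
  have s1 : SR * ((n : ℝ) / 2) ≤ EcylR := le_trans (mul_le_mul_of_nonneg_left A2 SRnn) A1
  have s2 : EcylR * (n : ℝ) ^ 3 ≤ (n : ℝ) ^ 2 * 2 ^ n :=
    le_trans (mul_le_mul_of_nonneg_left h2L Ecnn) A3
  constructor
  · -- Lyndon part
    set S2R := ((((lyndonWords 2 n).filter fun w =>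
        TwoEqualDisjointFactors (List.ofFn w) (3 * (Real.log n / Real.log 2))).card : ℝ)) with hS2R
    have hS'S : S2R ≤ SR := by
      rw [hS2R, hSR]
      exact_mod_cast Finset.card_le_card hSsub
    rw [div_le_div_iff₀ LCposR npos]
    have h3pos : (0 : ℝ) < (n : ℝ) ^ 3 := by positivity
    apply le_of_mul_le_mul_right ?_ h3pos
    have s3 : (n : ℝ) ^ 2 * 2 ^ n ≤ (n : ℝ) ^ 2 * (32 * n * ((lyndonWords 2 n).card : ℝ)) :=
      mul_le_mul_of_nonneg_left F5R (by positivity)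
    have big : SR * ((n : ℝ) / 2) * (n : ℝ) ^ 3
        ≤ (n : ℝ) ^ 2 * (32 * n * ((lyndonWords 2 n).card : ℝ)) := by
      calc SR * ((n : ℝ) / 2) * (n : ℝ) ^ 3 ≤ EcylR * (n : ℝ) ^ 3 :=
            mul_le_mul_of_nonneg_right s1 (by positivity)
        _ ≤ (n : ℝ) ^ 2 * 2 ^ n := s2
        _ ≤ _ := s3
    calc S2R * n * (n : ℝ) ^ 3
        ≤ SR * n * (n : ℝ) ^ 3 := by
          apply mul_le_mul_of_nonneg_right _ (by positivity)
          exact mul_le_mul_of_nonneg_right hS'S (by positivity)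
      _ = 2 * (SR * ((n : ℝ) / 2) * (n : ℝ) ^ 3) := by ring
      _ ≤ 2 * ((n : ℝ) ^ 2 * (32 * n * ((lyndonWords 2 n).card : ℝ))) := by linarith
      _ = 64 * ((lyndonWords 2 n).card : ℝ) * (n : ℝ) ^ 3 := by ring
  · -- all-words part
    set E2R := (((Finset.univ.filter fun w : Fin n → Fin 2 =>
        TwoEqualDisjointFactors (List.ofFn w) (3 * (Real.log n / Real.log 2))).card : ℝ)) with hE2R
    have hEallR : E2R ≤ EcylR := by
      rw [hE2R, hEc]
      exact_mod_cast Finset.card_le_card hEsub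
    have hE2nn : 0 ≤ E2R := by rw [hE2R]; exact Nat.cast_nonneg _
    have hp2 : (0 : ℝ) < (2 : ℝ) ^ n := pow_pos two_pos n
    rw [div_le_div_iff₀ hp2 npos]
    have h2pos : (0 : ℝ) < (n : ℝ) ^ 2 := by positivity
    apply le_of_mul_le_mul_right ?_ h2pos
    have hnn : (0 : ℝ) ≤ (n : ℝ) ^ 2 * 2 ^ n := by positivity
    calc E2R * n * (n : ℝ) ^ 2
        = E2R * (n : ℝ) ^ 3 := by ring
      _ ≤ EcylR * (n : ℝ) ^ 3 := mul_le_mul_of_nonneg_right hEallR (by positivity)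

      _ ≤ (n : ℝ) ^ 2 * 2 ^ n := s2
      _ ≤ 64 * 2 ^ n * (n : ℝ) ^ 2 := by linarith
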